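/- arXiv:1903.06981 — 3 statements merged into one kernel-verified Lean document; each statement's English description precedes it below -/
import Mathlib

section
/- For token swapping on a star with n vertices (center plus n-1 leaves), the minimum number of swaps equals n_U + ℓ, where n_U is the number of leaves whose initial token is not its destination token, and ℓ is the number of cycles of the token permutation that have length at least 2 and do not contain the center vertex. -/
/-- On a star with center `0` and leaves the nonzero elements of `Fin (n+1)`,
every edge is incident to the center, so a swap is specified by a leaf `v`:
it exchanges the token on the center with the token on `v`.
`π v` is the token currently on vertex `v`; sorted means `π = 1`. -/
def applyStarSwaps (n : ℕ) (π : Equiv.Perm (Fin (n + 1))) (s : List (Fin (n + 1))) :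
    Equiv.Perm (Fin (n + 1)) :=
  s.foldl (fun σ v => σ * Equiv.swap 0 v) π

namespace StarAux

open Equiv Equiv.Perm Finset

variable {n : ℕ}

/-- The potential: unhappy leaves plus cycles avoiding the center. -/
def phi (σ : Equiv.Perm (Fin (n + 1))) : ℕ :=
  (Finset.univ.filter fun v : Fin (n + 1) => v ≠ 0 ∧ σ v ≠ v).card +
    (σ.cycleFactorsFinset.filter fun c => c 0 = 0).card

lemma apply_cons (σ : Equiv.Perm (Fin (n + 1))) (v : Fin (n + 1)) (s : List (Fin (n + 1))) :
    applyStarSwaps n σ (v :: s) = applyStarSwaps n (σ * Equiv.swap 0 v) s := rfl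

lemma apply_nil (σ : Equiv.Perm (Fin (n + 1))) : applyStarSwaps n σ [] = σ := rfl

lemma phi_one : phi (1 : Equiv.Perm (Fin (n + 1))) = 0 := by
  simp [phi, Equiv.Perm.cycleFactorsFinset_one]

/-- Cycles avoiding both 0 and v are shared between σ and σ * swap 0 v. -/
lemma shared_subset (σ : Equiv.Perm (Fin (n + 1))) (v : Fin (n + 1)) :
    (σ.cycleFactorsFinset.filter fun c => c 0 = 0 ∧ c v = v) ⊆
      ((σ * Equiv.swap 0 v).cycleFactorsFinset.filter fun c => c 0 = 0 ∧ c v = v) := by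
  intro c hc
  rw [Finset.mem_filter, Equiv.Perm.mem_cycleFactorsFinset_iff] at hc ⊢
  obtain ⟨⟨hcyc, hagree⟩, h0, hv⟩ := hc
  refine ⟨⟨hcyc, ?_⟩, h0, hv⟩
  intro a ha
  have ha0 : a ≠ 0 := by
    rintro rfl; exact (Equiv.Perm.mem_support.mp ha) h0
  have hav : a ≠ v := by
    rintro rfl; exact (Equiv.Perm.mem_support.mp ha) hv
  rw [Equiv.Perm.mul_apply, Equiv.swap_apply_of_ne_of_ne ha0 hav]
  exact hagree a ha

lemma shared_eq (σ : Equiv.Perm (Fin (n + 1))) (v : Fin (n + 1)) :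
    ((σ * Equiv.swap 0 v).cycleFactorsFinset.filter fun c => c 0 = 0 ∧ c v = v) =
      (σ.cycleFactorsFinset.filter fun c => c 0 = 0 ∧ c v = v) := by
  apply Finset.Subset.antisymm
  · have := shared_subset (σ * Equiv.swap 0 v) v
    rwa [mul_assoc, Equiv.swap_mul_self, mul_one] at this
  · exact shared_subset σ v

/-- The number of cycles containing v but not 0. -/
lemma bcard (σ : Equiv.Perm (Fin (n + 1))) (v : Fin (n + 1)) :
    (σ.cycleFactorsFinset.filter fun c => c 0 = 0 ∧ c v ≠ v).card =
      if σ v ≠ v ∧ σ.cycleOf v 0 = 0 then 1 else 0 := by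
  split_ifs with h
  · obtain ⟨hσv, h0⟩ := h
    have he : (σ.cycleFactorsFinset.filter fun c => c 0 = 0 ∧ c v ≠ v) = {σ.cycleOf v} := by
      ext c
      simp only [Finset.mem_filter, Finset.mem_singleton]
      constructor
      · rintro ⟨hc, _, hcv⟩
        exact Equiv.Perm.cycle_is_cycleOf (Equiv.Perm.mem_support.mpr hcv) hc
      · rintro rfl
        refine ⟨Equiv.Perm.cycleOf_mem_cycleFactorsFinset_iff.mpr
          (Equiv.Perm.mem_support.mpr hσv), h0, ?_⟩
        rw [Equiv.Perm.cycleOf_apply_self]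
        exact hσv
    rw [he, Finset.card_singleton]
  · rw [Finset.card_eq_zero, Finset.filter_eq_empty_iff]
    intro c hc
    rintro ⟨hc0, hcv⟩
    have hceq : c = σ.cycleOf v :=
      Equiv.Perm.cycle_is_cycleOf (Equiv.Perm.mem_support.mpr hcv) hc
    have hσv : σ v ≠ v := by
      have := (Equiv.Perm.mem_cycleFactorsFinset_iff.mp hc).2 v
        (Equiv.Perm.mem_support.mpr hcv)
      rwa [this] at hcv
    exact h ⟨hσv, by rw [← hceq]; exact hc0⟩

/-- Decomposition of the cycle count. -/
lemma L_split (σ : Equiv.Perm (Fin (n + 1))) (v : Fin (n + 1)) :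
    (σ.cycleFactorsFinset.filter fun c => c 0 = 0).card =
      (σ.cycleFactorsFinset.filter fun c => c 0 = 0 ∧ c v = v).card +
      (if σ v ≠ v ∧ σ.cycleOf v 0 = 0 then 1 else 0) := by
  rw [← bcard σ v]
  have h := Finset.card_filter_add_card_filter_not
    (s := σ.cycleFactorsFinset.filter fun c => c 0 = 0) (p := fun c => c v = v)
  rw [Finset.filter_filter, Finset.filter_filter] at h
  exact h.symm

/-- Decomposition of the unhappy-leaf count. -/
lemma nU_split (σ : Equiv.Perm (Fin (n + 1))) {v : Fin (n + 1)} (hv : v ≠ 0) :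
    (Finset.univ.filter fun w : Fin (n + 1) => w ≠ 0 ∧ σ w ≠ w).card =
      (Finset.univ.filter fun w : Fin (n + 1) => w ≠ 0 ∧ w ≠ v ∧ σ w ≠ w).card +
      (if σ v = v then 0 else 1) := by
  have h := Finset.card_filter_add_card_filter_not
    (s := Finset.univ.filter fun w : Fin (n + 1) => w ≠ 0 ∧ σ w ≠ w) (p := fun w => w ≠ v)
  rw [Finset.filter_filter, Finset.filter_filter] at h
  have e1 : (Finset.univ.filter fun w : Fin (n + 1) => (w ≠ 0 ∧ σ w ≠ w) ∧ w ≠ v) =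
      (Finset.univ.filter fun w : Fin (n + 1) => w ≠ 0 ∧ w ≠ v ∧ σ w ≠ w) := by
    apply Finset.filter_congr; intro w _; tauto
  have e2 : (Finset.univ.filter fun w : Fin (n + 1) => (w ≠ 0 ∧ σ w ≠ w) ∧ ¬w ≠ v) =
      if σ v = v then ∅ else {v} := by
    split_ifs with hsv
    · ext w
      simp only [Finset.mem_filter, Finset.mem_univ, true_and, Finset.notMem_empty,
        iff_false, not_not]
      rintro ⟨⟨_, hw⟩, rfl⟩
      exact hw hsv
    · ext w
      simp only [Finset.mem_filter, Finset.mem_univ, true_and, Finset.mem_singleton, not_not]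
      constructor
      · rintro ⟨_, rfl⟩; rfl
      · rintro rfl; exact ⟨⟨hv, hsv⟩, rfl⟩
  rw [e1, e2] at h
  split_ifs at h ⊢ with hsv
  · simp only [Finset.card_empty] at h; omega
  · simp only [Finset.card_singleton] at h; omega

lemma nU_shared (σ : Equiv.Perm (Fin (n + 1))) (v : Fin (n + 1)) :
    (Finset.univ.filter fun w : Fin (n + 1) => w ≠ 0 ∧ w ≠ v ∧ (σ * Equiv.swap 0 v) w ≠ w) =
      (Finset.univ.filter fun w : Fin (n + 1) => w ≠ 0 ∧ w ≠ v ∧ σ w ≠ w) := by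
  apply Finset.filter_congr
  intro w _
  constructor <;> rintro ⟨h0, hv, hw⟩ <;> refine ⟨h0, hv, ?_⟩ <;>
    simpa [Equiv.Perm.mul_apply, Equiv.swap_apply_of_ne_of_ne h0 hv] using hw

lemma phi_decomp (σ : Equiv.Perm (Fin (n + 1))) {v : Fin (n + 1)} (hv : v ≠ 0) :
    phi σ = ((Finset.univ.filter fun w : Fin (n + 1) => w ≠ 0 ∧ w ≠ v ∧ σ w ≠ w).card +
        (σ.cycleFactorsFinset.filter fun c => c 0 = 0 ∧ c v = v).card) +
      ((if σ v = v then 0 else 1) + (if σ v ≠ v ∧ σ.cycleOf v 0 = 0 then 1 else 0)) := by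
  rw [phi, nU_split σ hv, L_split σ v]; ring

lemma sameCycle_of_apply_center {σ : Equiv.Perm (Fin (n + 1))} {v : Fin (n + 1)}
    (h : σ 0 = v) : σ.SameCycle v 0 :=
  Equiv.Perm.SameCycle.symm ⟨1, by simpa using h⟩

/-- Key step lemma: each swap decreases the potential by at most one. -/
lemma step_ge (σ : Equiv.Perm (Fin (n + 1))) {v : Fin (n + 1)} (hv : v ≠ 0) :
    phi σ ≤ phi (σ * Equiv.swap 0 v) + 1 := by
  rw [phi_decomp σ hv, phi_decomp (σ * Equiv.swap 0 v) hv, shared_eq, nU_shared]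
  have hv' : (σ * Equiv.swap 0 v) v = σ 0 := by
    rw [Equiv.Perm.mul_apply, Equiv.swap_apply_right]
  have hbad : ¬ (σ v ≠ v ∧ σ.cycleOf v 0 = 0 ∧ (σ * Equiv.swap 0 v) v = v) := by
    rintro ⟨h1, h2, h3⟩
    rw [hv'] at h3
    have hsc : σ.SameCycle v 0 := sameCycle_of_apply_center h3
    rw [Equiv.Perm.cycleOf_apply, if_pos hsc, h3] at h2
    exact hv h2
  split_ifs <;> first | omega | (exfalso; apply hbad; tauto)

/-- If σ is not sorted, some swap decreases the potential by exactly one. -/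
lemma step_exists (σ : Equiv.Perm (Fin (n + 1))) (hσ : σ ≠ 1) :
    ∃ v : Fin (n + 1), v ≠ 0 ∧ phi (σ * Equiv.swap 0 v) + 1 = phi σ := by
  by_cases h0 : σ 0 = 0
  · obtain ⟨v, hv⟩ : ∃ v, σ v ≠ v := by
      by_contra hall
      push_neg at hall
      exact hσ (Equiv.ext fun x => hall x)
    have hv0 : v ≠ 0 := by rintro rfl; exact hv h0
    refine ⟨v, hv0, ?_⟩
    rw [phi_decomp σ hv0, phi_decomp (σ * Equiv.swap 0 v) hv0, shared_eq, nU_shared]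
    have hσ'v : (σ * Equiv.swap 0 v) v = 0 := by
      rw [Equiv.Perm.mul_apply, Equiv.swap_apply_right, h0]
    have hσv0 : σ v ≠ 0 := fun hc => hv0 (σ.injective (hc.trans h0.symm))
    have c2 : σ.cycleOf v 0 = 0 := by
      rw [Equiv.Perm.cycleOf_apply, if_neg]
      intro hsc
      exact hv0 (hsc.symm.eq_of_left h0).symm
    have c4 : ¬ ((σ * Equiv.swap 0 v).cycleOf v 0 = 0) := by
      have hsc : (σ * Equiv.swap 0 v).SameCycle v 0 := ⟨1, by simpa using hσ'v⟩
      rw [Equiv.Perm.cycleOf_apply, if_pos hsc, Equiv.Perm.mul_apply,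
        Equiv.swap_apply_left]
      exact hσv0
    have h3 : (σ * Equiv.swap 0 v) v ≠ v := by
      rw [hσ'v]; exact fun hc => hv0 hc.symm
    have c4' : ¬ ((σ * Equiv.swap 0 v) v ≠ v ∧ ((σ * Equiv.swap 0 v).cycleOf v) 0 = 0) := by
      rintro ⟨_, hc⟩; exact c4 hc
    have c2' : σ v ≠ v ∧ σ.cycleOf v 0 = 0 := ⟨hv, c2⟩
    split_ifs <;> first | omega | (exfalso; tauto)
  · refine ⟨σ 0, h0, ?_⟩
    set v := σ 0 with hvdef
    have hσv : σ v ≠ v := by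
      intro hc
      exact h0 (σ.injective (hc.trans hvdef))
    rw [phi_decomp σ h0, phi_decomp (σ * Equiv.swap 0 v) h0, shared_eq, nU_shared]
    have hσ'v : (σ * Equiv.swap 0 v) v = v := by
      rw [Equiv.Perm.mul_apply, Equiv.swap_apply_right, hvdef]
    have c2 : ¬ (σ.cycleOf v 0 = 0) := by
      have hsc : σ.SameCycle v 0 := sameCycle_of_apply_center rfl
      rw [Equiv.Perm.cycleOf_apply, if_pos hsc, ← hvdef]
      exact h0
    have c2' : ¬ (σ v ≠ v ∧ σ.cycleOf v 0 = 0) := by rintro ⟨_, hc⟩; exact c2 hc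
    have c4' : ¬ ((σ * Equiv.swap 0 v) v ≠ v ∧ ((σ * Equiv.swap 0 v).cycleOf v) 0 = 0) := by
      rintro ⟨hc, _⟩; exact hc hσ'v
    split_ifs <;> first | omega | (exfalso; tauto)

lemma lower_bound (s : List (Fin (n + 1))) :
    ∀ σ : Equiv.Perm (Fin (n + 1)), (∀ v ∈ s, v ≠ 0) → applyStarSwaps n σ s = 1 →
      phi σ ≤ s.length := by
  induction s with
  | nil => intro σ _ h1; rw [apply_nil] at h1; simp [h1, phi_one]
  | cons v s ih =>
    intro σ hs h1
    rw [apply_cons] at h1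
    have hv : v ≠ 0 := hs v List.mem_cons_self
    have := ih (σ * Equiv.swap 0 v) (fun w hw => hs w (List.mem_cons_of_mem v hw)) h1
    calc phi σ ≤ phi (σ * Equiv.swap 0 v) + 1 := step_ge σ hv
      _ ≤ s.length + 1 := by omega
      _ = (v :: s).length := by simp

lemma upper_bound (σ : Equiv.Perm (Fin (n + 1))) :
    ∃ s : List (Fin (n + 1)), (∀ v ∈ s, v ≠ 0) ∧ applyStarSwaps n σ s = 1 ∧
      s.length = phi σ := by
  generalize hk : phi σ = k
  induction k using Nat.strong_induction_on generalizing σ with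
  | _ k ih =>
    by_cases h1 : σ = 1
    · exact ⟨[], by simp, by simp [apply_nil, h1], by simp [← hk, h1, phi_one]⟩
    · obtain ⟨v, hv, hstep⟩ := step_exists σ h1
      have hlt : phi (σ * Equiv.swap 0 v) < k := by omega
      obtain ⟨s, hs1, hs2, hs3⟩ := ih _ hlt (σ * Equiv.swap 0 v) rfl
      refine ⟨v :: s, ?_, ?_, ?_⟩
      · intro w hw
        rcases List.mem_cons.mp hw with rfl | hw
        · exact hv
        · exact hs1 w hw
      · rw [apply_cons]; exact hs2
      · simp [hs3]; omega

end StarAux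

/-- Star formula: the minimum number of swaps sorting a token placement on a star
equals `n_U + ℓ`, where `n_U` is the number of unhappy leaves and `ℓ` is the number of
cycles of the token permutation of length ≥ 2 not containing the center. -/
theorem stmt4 (n : ℕ) (π : Equiv.Perm (Fin (n + 1))) :
    IsLeast {m : ℕ | ∃ s : List (Fin (n + 1)), (∀ v ∈ s, v ≠ 0) ∧
        applyStarSwaps n π s = 1 ∧ s.length = m}
      ((Finset.univ.filter fun v : Fin (n + 1) => v ≠ 0 ∧ π v ≠ v).card +
        (π.cycleFactorsFinset.filter fun c => c 0 = 0).card) := by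
  constructor
  · obtain ⟨s, h1, h2, h3⟩ := StarAux.upper_bound π
    exact ⟨s, h1, h2, h3⟩
  · rintro m ⟨s, h1, h2, rfl⟩
    exact StarAux.lower_bound s π h1 h2
end

section
/- Any swap sequence on a star that at some point swaps the token off a happy leaf uses at least two more swaps than an optimal swap sequence. -/
namespace Stmt9Aux

open Equiv Equiv.Perm Finset

variable {n : ℕ}

/-- number of unhappy leaves -/
def U (σ : Equiv.Perm (Fin (n + 1))) : ℕ :=
  (Finset.univ.filter fun v : Fin (n + 1) => v ≠ 0 ∧ σ v ≠ v).card

/-- number of (nontrivial) cycles avoiding the center -/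
def L (σ : Equiv.Perm (Fin (n + 1))) : ℕ :=
  (σ.cycleFactorsFinset.filter fun c => c 0 = 0).card

def Phi (σ : Equiv.Perm (Fin (n + 1))) : ℕ := U σ + L σ

lemma mul_swap_apply (σ : Equiv.Perm (Fin (n + 1))) (v x : Fin (n + 1))
    (hx0 : x ≠ 0) (hxv : x ≠ v) : (σ * Equiv.swap 0 v) x = σ x := by
  simp [Equiv.Perm.mul_apply, Equiv.swap_apply_of_ne_of_ne hx0 hxv]

/-- the cycles avoiding both `0` and `v` are the same for `σ` and `σ * swap 0 v`. -/
lemma Aset_eq (σ : Equiv.Perm (Fin (n + 1))) (v : Fin (n + 1)) :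
    (σ.cycleFactorsFinset.filter fun c => c 0 = 0 ∧ c v = v) =
      ((σ * Equiv.swap 0 v).cycleFactorsFinset.filter fun c => c 0 = 0 ∧ c v = v) := by
  ext c
  simp only [Finset.mem_filter, Equiv.Perm.mem_cycleFactorsFinset_iff]
  constructor
  · rintro ⟨⟨hc, hsupp⟩, h0, hv⟩
    refine ⟨⟨hc, fun x hx => ?_⟩, h0, hv⟩
    have hx0 : x ≠ 0 := fun h => (Equiv.Perm.mem_support.mp (h ▸ hx)) h0
    have hxv : x ≠ v := fun h => (Equiv.Perm.mem_support.mp (h ▸ hx)) hv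
    rw [mul_swap_apply σ v x hx0 hxv]; exact hsupp x hx
  · rintro ⟨⟨hc, hsupp⟩, h0, hv⟩
    refine ⟨⟨hc, fun x hx => ?_⟩, h0, hv⟩
    have hx0 : x ≠ 0 := fun h => (Equiv.Perm.mem_support.mp (h ▸ hx)) h0
    have hxv : x ≠ v := fun h => (Equiv.Perm.mem_support.mp (h ▸ hx)) hv
    rw [← mul_swap_apply σ v x hx0 hxv]; exact hsupp x hx

lemma A_le_L (σ : Equiv.Perm (Fin (n + 1))) (v : Fin (n + 1)) :
    (σ.cycleFactorsFinset.filter fun c => c 0 = 0 ∧ c v = v).card ≤ L σ := by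
  apply Finset.card_le_card
  intro c hc
  simp only [Finset.mem_filter] at hc ⊢
  exact ⟨hc.1, hc.2.1⟩

lemma L_le_A_add_one (σ : Equiv.Perm (Fin (n + 1))) (v : Fin (n + 1)) :
    L σ ≤ (σ.cycleFactorsFinset.filter fun c => c 0 = 0 ∧ c v = v).card + 1 := by
  have hsub : (σ.cycleFactorsFinset.filter fun c => c 0 = 0) ⊆
      (σ.cycleFactorsFinset.filter fun c => c 0 = 0 ∧ c v = v) ∪
        (σ.cycleFactorsFinset.filter fun c => c v ≠ v) := by
    intro c hc
    simp only [Finset.mem_filter, Finset.mem_union] at hc ⊢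
    by_cases h : c v = v
    · exact Or.inl ⟨hc.1, hc.2, h⟩
    · exact Or.inr ⟨hc.1, h⟩
  have hone : (σ.cycleFactorsFinset.filter fun c => c v ≠ v).card ≤ 1 := by
    apply Finset.card_le_one.mpr
    intro c₁ h₁ c₂ h₂
    simp only [Finset.mem_filter] at h₁ h₂
    rw [Equiv.Perm.cycle_is_cycleOf (Equiv.Perm.mem_support.mpr h₁.2) h₁.1,
      Equiv.Perm.cycle_is_cycleOf (Equiv.Perm.mem_support.mpr h₂.2) h₂.1]
  calc L σ ≤ _ := Finset.card_le_card hsub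
    _ ≤ _ := Finset.card_union_le _ _
    _ ≤ _ := by omega

/-- If `σ 0 = v` then every cycle of `σ` avoiding `0` avoids `v`. -/
lemma cycle_fix_v_of_apply_zero (σ : Equiv.Perm (Fin (n + 1))) (v : Fin (n + 1))
    (hv : v ≠ 0) (h0v : σ 0 = v) {c : Equiv.Perm (Fin (n + 1))}
    (hc : c ∈ σ.cycleFactorsFinset) (h0 : c 0 = 0) : c v = v := by
  by_contra hcv
  have hvs : v ∈ c.support := Equiv.Perm.mem_support.mpr hcv
  have hcyc : c = σ.cycleOf v := Equiv.Perm.cycle_is_cycleOf hvs hc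
  have hsc : σ.SameCycle v 0 := (Equiv.Perm.SameCycle.symm ⟨1, by simpa using h0v⟩)
  have : c 0 = σ 0 := by rw [hcyc, Equiv.Perm.cycleOf_apply, if_pos hsc]
  rw [h0, h0v] at this
  exact hv this.symm

/-- If `σ v = v` then every cycle of `σ` avoiding `0` avoids `v`. -/
lemma cycle_fix_v_of_fix (σ : Equiv.Perm (Fin (n + 1))) (v : Fin (n + 1))
    (hfix : σ v = v) {c : Equiv.Perm (Fin (n + 1))}
    (hc : c ∈ σ.cycleFactorsFinset) (_h0 : c 0 = 0) : c v = v := by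
  by_contra hcv
  obtain ⟨-, hsupp⟩ := Equiv.Perm.mem_cycleFactorsFinset_iff.mp hc
  exact hcv ((hsupp v (Equiv.Perm.mem_support.mpr hcv)).trans hfix)

lemma U_le_add_one (σ : Equiv.Perm (Fin (n + 1))) (v : Fin (n + 1)) :
    U σ ≤ U (σ * Equiv.swap 0 v) + 1 := by
  have hsub : (Finset.univ.filter fun x : Fin (n + 1) => x ≠ 0 ∧ σ x ≠ x) ⊆
      (Finset.univ.filter fun x : Fin (n + 1) => x ≠ 0 ∧ (σ * Equiv.swap 0 v) x ≠ x) ∪ {v} := by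
    intro x hx
    simp only [Finset.mem_filter, Finset.mem_union, Finset.mem_singleton, Finset.mem_univ,
      true_and] at hx ⊢
    by_cases hxv : x = v
    · exact Or.inr hxv
    · exact Or.inl ⟨hx.1, by rw [mul_swap_apply σ v x hx.1 hxv]; exact hx.2⟩
  calc U σ ≤ _ := Finset.card_le_card hsub
    _ ≤ _ + 1 := by
        refine (Finset.card_union_le _ _).trans ?_
        simp [U]
    _ = _ := rfl

lemma phi_step (σ : Equiv.Perm (Fin (n + 1))) (v : Fin (n + 1)) (hv : v ≠ 0) :
    Phi σ ≤ Phi (σ * Equiv.swap 0 v) + 1 := by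
  by_cases h0v : σ 0 = v
  · -- L does not decrease, U drops by at most one
    have hL : L σ ≤ L (σ * Equiv.swap 0 v) := by
      have : (σ.cycleFactorsFinset.filter fun c => c 0 = 0) =
          (σ.cycleFactorsFinset.filter fun c => c 0 = 0 ∧ c v = v) := by
        apply Finset.filter_congr
        intro c hc
        exact ⟨fun h0 => ⟨h0, cycle_fix_v_of_apply_zero σ v hv h0v hc h0⟩, fun h => h.1⟩
      calc L σ = _ := by rw [L, this]
        _ = _ := by rw [Aset_eq σ v]
        _ ≤ _ := A_le_L _ v
    have hU := U_le_add_one σ v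
    simp only [Phi]; omega
  · -- U does not decrease, L drops by at most one
    have hU : U σ ≤ U (σ * Equiv.swap 0 v) := by
      apply Finset.card_le_card
      intro x hx
      simp only [Finset.mem_filter, Finset.mem_univ, true_and] at hx ⊢
      by_cases hxv : x = v
      · refine ⟨hx.1, ?_⟩
        rw [hxv, Equiv.Perm.mul_apply, Equiv.swap_apply_right]
        exact h0v
      · exact ⟨hx.1, by rw [mul_swap_apply σ v x hx.1 hxv]; exact hx.2⟩
    have hL : L σ ≤ L (σ * Equiv.swap 0 v) + 1 := by
      calc L σ ≤ _ + 1 := L_le_A_add_one σ v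
        _ = _ + 1 := by rw [Aset_eq σ v]
        _ ≤ _ + 1 := by exact Nat.add_le_add_right (A_le_L _ v) 1
    simp only [Phi]; omega

lemma phi_happy (σ : Equiv.Perm (Fin (n + 1))) (v : Fin (n + 1)) (hv : v ≠ 0)
    (hfix : σ v = v) : Phi σ + 1 ≤ Phi (σ * Equiv.swap 0 v) := by
  have h0v : σ 0 ≠ v := fun h => hv (σ.injective (h.trans hfix.symm)).symm
  have hU : U σ + 1 ≤ U (σ * Equiv.swap 0 v) := by
    have hvmem : v ∉ (Finset.univ.filter fun x : Fin (n + 1) => x ≠ 0 ∧ σ x ≠ x) :=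
      fun h => ((Finset.mem_filter.mp h).2).2 hfix
    have hsub : insert v (Finset.univ.filter fun x : Fin (n + 1) => x ≠ 0 ∧ σ x ≠ x) ⊆
        (Finset.univ.filter fun x : Fin (n + 1) => x ≠ 0 ∧ (σ * Equiv.swap 0 v) x ≠ x) := by
      intro x hx
      simp only [Finset.mem_insert, Finset.mem_filter, Finset.mem_univ, true_and] at hx ⊢
      rcases hx with hxv | hx
      · refine ⟨by rw [hxv]; exact hv, ?_⟩
        rw [hxv, Equiv.Perm.mul_apply, Equiv.swap_apply_right]
        exact h0v
      · have hxv : x ≠ v := fun h => hx.2 (h ▸ hfix)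
        exact ⟨hx.1, by rw [mul_swap_apply σ v x hx.1 hxv]; exact hx.2⟩
    calc U σ + 1
        = (insert v (Finset.univ.filter fun x : Fin (n + 1) => x ≠ 0 ∧ σ x ≠ x)).card :=
          (Finset.card_insert_of_notMem hvmem).symm
      _ ≤ _ := Finset.card_le_card hsub
  have hL : L σ ≤ L (σ * Equiv.swap 0 v) := by
    have : (σ.cycleFactorsFinset.filter fun c => c 0 = 0) =
        (σ.cycleFactorsFinset.filter fun c => c 0 = 0 ∧ c v = v) := by
      apply Finset.filter_congr
      intro c hc
      exact ⟨fun h0 => ⟨h0, cycle_fix_v_of_fix σ v hfix hc h0⟩, fun h => h.1⟩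
    calc L σ = _ := by rw [L, this]
      _ = _ := by rw [Aset_eq σ v]
      _ ≤ _ := A_le_L _ v
  simp only [Phi]; omega

lemma apply_append (σ : Equiv.Perm (Fin (n + 1))) (a b : List (Fin (n + 1))) :
    applyStarSwaps n σ (a ++ b) = applyStarSwaps n (applyStarSwaps n σ a) b :=
  List.foldl_append

lemma phi_one : Phi (1 : Equiv.Perm (Fin (n + 1))) = 0 := by
  simp [Phi, U, L, Equiv.Perm.cycleFactorsFinset_one]

/-- the potential drops by at most one per swap -/
lemma phi_le_run (σ : Equiv.Perm (Fin (n + 1))) (s : List (Fin (n + 1)))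
    (hleaf : ∀ v ∈ s, v ≠ 0) :
    Phi σ ≤ Phi (applyStarSwaps n σ s) + s.length := by
  induction s generalizing σ with
  | nil => simp [applyStarSwaps]
  | cons v l ih =>
    have h1 : Phi σ ≤ Phi (σ * Equiv.swap 0 v) + 1 :=
      phi_step σ v (hleaf v List.mem_cons_self)
    have h2 := ih (σ * Equiv.swap 0 v) (fun w hw => hleaf w (List.mem_cons_of_mem _ hw))
    have h3 : applyStarSwaps n σ (v :: l) = applyStarSwaps n (σ * Equiv.swap 0 v) l := rfl
    rw [h3]
    simp only [List.length_cons]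
    omega

lemma phi_le_length (σ : Equiv.Perm (Fin (n + 1))) (s : List (Fin (n + 1)))
    (hleaf : ∀ v ∈ s, v ≠ 0) (hsort : applyStarSwaps n σ s = 1) :
    Phi σ ≤ s.length := by
  have := phi_le_run σ s hleaf
  rw [hsort, phi_one] at this
  simpa using this

end Stmt9Aux

/-- Any sorting swap sequence on a star that at some point swaps the token off a
happy leaf (a leaf whose current token is its destination) uses at least two more
swaps than an optimal swap sequence, whose length is `n_U + ℓ` by the star formula. -/
theorem stmt9 (n : ℕ) (π : Equiv.Perm (Fin (n + 1)))
    (s : List (Fin (n + 1))) (hleaf : ∀ v ∈ s, v ≠ 0)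
    (hsort : applyStarSwaps n π s = 1)
    (t : ℕ) (ht : t < s.length)
    (hhappy : applyStarSwaps n π (s.take t) (s.get ⟨t, ht⟩) = s.get ⟨t, ht⟩) :
    ((Finset.univ.filter fun v : Fin (n + 1) => v ≠ 0 ∧ π v ≠ v).card +
        (π.cycleFactorsFinset.filter fun c => c 0 = 0).card) + 2 ≤ s.length := by
  open Stmt9Aux in
  show Phi π + 2 ≤ s.length
  set v := s.get ⟨t, ht⟩ with hv
  have hv0 : v ≠ 0 := hleaf v (s.get_mem _)
  set σt := applyStarSwaps n π (s.take t) with hσt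
  -- split s as take (t+1) ++ drop (t+1), and take (t+1) = take t ++ [v]
  have htake : s.take (t + 1) = s.take t ++ [v] := by
    rw [List.take_succ]
    congr 1
    rw [List.getElem?_eq_getElem ht]
    simp [hv]
  have hsplit : applyStarSwaps n π (s.take (t + 1)) = σt * Equiv.swap 0 v := by
    rw [htake, Stmt9Aux.apply_append]
    rfl
  have hdrop : applyStarSwaps n (σt * Equiv.swap 0 v) (s.drop (t + 1)) = 1 := by
    rw [← hsplit, ← Stmt9Aux.apply_append, List.take_append_drop, hsort]
  -- the three estimates
  have h1 : Phi π ≤ Phi σt + t := by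
    have := Stmt9Aux.phi_le_run π (s.take t)
      (fun w hw => hleaf w (List.mem_of_mem_take hw))
    rwa [List.length_take, Nat.min_eq_left ht.le] at this
  have h2 : Phi σt + 1 ≤ Phi (σt * Equiv.swap 0 v) :=
    Stmt9Aux.phi_happy σt v hv0 hhappy
  have h3 : Phi (σt * Equiv.swap 0 v) ≤ s.length - (t + 1) := by
    have := Stmt9Aux.phi_le_length _ (s.drop (t + 1))
      (fun w hw => hleaf w (List.mem_of_mem_drop hw)) hdrop
    rwa [List.length_drop] at this
  omega
end

section
/- An optimal swap sequence never swaps the same pair of tokens twice: if a sorting swap sequence contains two swaps exchanging the same two tokens a and b, then there is a strictly shorter swap sequence achieving the same sorting. -/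
/-- Apply a list of swaps to a token placement `π` (`π v` = token on vertex `v`). -/
def applySwaps {V : Type*} [DecidableEq V] (π : Equiv.Perm V) (s : List (V × V)) :
    Equiv.Perm V :=
  s.foldl (fun σ e => σ * Equiv.swap e.1 e.2) π

lemma applySwaps_append {V : Type*} [DecidableEq V] (π : Equiv.Perm V)
    (l₁ l₂ : List (V × V)) :
    applySwaps π (l₁ ++ l₂) = applySwaps (applySwaps π l₁) l₂ :=
  List.foldl_append ..

lemma applySwaps_cons {V : Type*} [DecidableEq V] (π : Equiv.Perm V)
    (e : V × V) (l : List (V × V)) :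
    applySwaps π (e :: l) = applySwaps (π * Equiv.swap e.1 e.2) l := rfl

lemma applySwaps_mul_left {V : Type*} [DecidableEq V] (τ π : Equiv.Perm V)
    (l : List (V × V)) :
    applySwaps (τ * π) l = τ * applySwaps π l := by
  induction l generalizing π with
  | nil => rfl
  | cons e l ih => rw [applySwaps_cons, applySwaps_cons, mul_assoc, ih]

/-- An optimal swap sequence never swaps the same pair of tokens twice: if a sorting
swap sequence contains two swaps (at positions `i < j`) both exchanging the same two
tokens `a` and `b`, then there is a strictly shorter swap sequence. -/
theorem stmt17 {V : Type*} [DecidableEq V] (G : SimpleGraph V) (π : Equiv.Perm V)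
    (s : List (V × V)) (hval : ∀ e ∈ s, G.Adj e.1 e.2)
    (hsort : applySwaps π s = 1)
    (i j : ℕ) (hij : i < j) (hj : j < s.length) (a b : V)
    (hi : ((applySwaps π (s.take i)) (s.get ⟨i, hij.trans hj⟩).1 = a ∧
            (applySwaps π (s.take i)) (s.get ⟨i, hij.trans hj⟩).2 = b) ∨
          ((applySwaps π (s.take i)) (s.get ⟨i, hij.trans hj⟩).1 = b ∧
            (applySwaps π (s.take i)) (s.get ⟨i, hij.trans hj⟩).2 = a))
    (hjj : ((applySwaps π (s.take j)) (s.get ⟨j, hj⟩).1 = a ∧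
            (applySwaps π (s.take j)) (s.get ⟨j, hj⟩).2 = b) ∨
          ((applySwaps π (s.take j)) (s.get ⟨j, hj⟩).1 = b ∧
            (applySwaps π (s.take j)) (s.get ⟨j, hj⟩).2 = a)) :
    ∃ s' : List (V × V), (∀ e ∈ s', G.Adj e.1 e.2) ∧ applySwaps π s' = 1 ∧
      s'.length < s.length := by
  classical
  set p : V × V := s.get ⟨i, hij.trans hj⟩ with hp
  set q : V × V := s.get ⟨j, hj⟩ with hq
  set A : List (V × V) := s.take i with hA
  set B : List (V × V) := (s.take j).drop (i + 1) with hB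
  set C : List (V × V) := s.drop (j + 1) with hC
  have hi' : i < s.length := hij.trans hj
  -- decomposition of the list
  have htj : s.take j = A ++ p :: B := by
    have h1 : (s.take j).take (i+1) ++ (s.take j).drop (i+1) = s.take j :=
      List.take_append_drop _ _
    have h2 : (s.take j).take (i+1) = s.take (i+1) := by
      rw [List.take_take, min_eq_left (by omega)]
    have h3 : s.take (i+1) = A ++ [p] := by
      rw [hA, hp, List.get_eq_getElem, ← List.take_concat_get hi',
        List.concat_eq_append]
    rw [← h1, h2, h3, hB]; simp
  have hs : s = A ++ p :: (B ++ q :: C) := by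
    have h1 : s.take j ++ s.drop j = s := List.take_append_drop _ _
    have h2 : s.drop j = q :: C := by
      rw [hC, hq, List.get_eq_getElem]
      exact List.drop_eq_getElem_cons hj
    rw [← h1, h2, htj]; simp
  set P : Equiv.Perm V := applySwaps π A with hP
  -- the i-th swap acts as swap a b on tokens
  have hPi : P * Equiv.swap p.1 p.2 = Equiv.swap a b * P := by
    rw [Equiv.mul_swap_eq_swap_mul]
    rcases hi with ⟨h1, h2⟩ | ⟨h1, h2⟩
    · rw [h1, h2]
    · rw [h1, h2, Equiv.swap_comm]
  set Q : Equiv.Perm V := applySwaps P B with hQ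
  have hPj : applySwaps π (s.take j) = Equiv.swap a b * Q := by
    rw [htj, applySwaps_append, applySwaps_cons, hPi, applySwaps_mul_left, hQ]
  have hQj : (Equiv.swap a b * Q) * Equiv.swap q.1 q.2 = Q := by
    rw [Equiv.mul_swap_eq_swap_mul]
    rcases hjj with ⟨h1, h2⟩ | ⟨h1, h2⟩ <;> rw [hPj] at h1 h2
    · rw [h1, h2, ← mul_assoc, Equiv.swap_mul_self, one_mul]
    · rw [h1, h2, Equiv.swap_comm, ← mul_assoc, Equiv.swap_mul_self, one_mul]
  refine ⟨A ++ B ++ C, ?_, ?_, ?_⟩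
  · intro e he
    apply hval
    rw [hs]
    simp only [List.mem_append, List.mem_cons] at he ⊢
    tauto
  · have h1 : applySwaps π s = applySwaps Q C := by
      conv_lhs => rw [hs]
      rw [applySwaps_append, applySwaps_cons, ← hP, hPi, applySwaps_append,
        applySwaps_mul_left]
      rw [applySwaps_cons]
      have := hQj
      rw [← hQ]
      rw [hQj]
    rw [applySwaps_append, applySwaps_append, ← hP, ← hQ, ← h1, hsort]
  · have := congrArg List.length hs
    simp at this ⊢
    omega
end
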